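/- Let X, Y be real Hilbert spaces, A : X → Y a bounded linear operator with a diagonal frame decomposition (u_λ, v_λ, κ_λ)_{λ∈Λ}, sup_λ κ_λ < ∞, and let (ū_λ)_λ be a dual frame of (u_λ)_λ whose synthesis operator T_ū : ℓ²(Λ) → X is bounded. Let (φ_α)_{α>0} be a non-linear regularizing filter satisfying Assumption B and define B_α(y) := ∑_λ κ_λ⁻¹ φ_α(κ_λ, ⟨y, v_λ⟩) ū_λ. Fix α > 0 and let y^δ, y^k ∈ Y with y^k → y^δ in norm. Then B_α(y^k) and B_α(y^δ) are well defined and B_α(y^k) converges weakly to B_α(y^δ) in X, i.e. ⟨B_α(y^k), w⟩ → ⟨B_α(y^δ), w⟩ for every w ∈ X. -/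

import Mathlib

open scoped ENNReal RealInnerProductSpace
open Filter

noncomputable section

private lemma aux_abs_mul_le {a b : ℝ} : |a * b| ≤ (a ^ 2 + b ^ 2) / 2 := by
  rw [abs_mul]
  nlinarith [sq_nonneg (|a| - |b|), sq_abs a, sq_abs b, abs_nonneg a, abs_nonneg b]

private lemma aux_summable_mul {ι : Type*} {f g : ι → ℝ}
    (hf : Summable fun i => f i ^ 2) (hg : Summable fun i => g i ^ 2) :
    Summable fun i => |f i * g i| :=
  Summable.of_nonneg_of_le (fun _ => abs_nonneg _) (fun _ => aux_abs_mul_le)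
    ((hf.add hg).div_const 2)

private lemma aux_cs_tsum {ι : Type*} {f g : ι → ℝ}
    (hf : Summable fun i => f i ^ 2) (hg : Summable fun i => g i ^ 2) :
    |∑' i, f i * g i| ≤ Real.sqrt (∑' i, f i ^ 2) * Real.sqrt (∑' i, g i ^ 2) := by
  have habs := aux_summable_mul hf hg
  have h1 : |∑' i, f i * g i| ≤ ∑' i, |f i * g i| :=
    norm_tsum_le_tsum_norm (f := fun i => f i * g i) habs
  refine h1.trans (Summable.tsum_le_of_sum_le habs fun s => ?_)
  have hcs := Finset.sum_mul_sq_le_sq_mul_sq s (fun i => |f i|) (fun i => |g i|)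
  have h2 : ∑ i ∈ s, |f i * g i| = ∑ i ∈ s, |f i| * |g i| := by simp [abs_mul]
  have h3 : (∑ i ∈ s, |f i| * |g i|) ≤
      Real.sqrt ((∑ i ∈ s, f i ^ 2) * ∑ i ∈ s, g i ^ 2) := by
    rw [← Real.sqrt_sq (Finset.sum_nonneg fun i _ => mul_nonneg (abs_nonneg _) (abs_nonneg _))]
    apply Real.sqrt_le_sqrt
    simpa [sq_abs] using hcs
  rw [h2]
  refine h3.trans ?_
  rw [Real.sqrt_mul (Finset.sum_nonneg fun i _ => sq_nonneg _)]
  have e1 : (∑ i ∈ s, f i ^ 2) ≤ ∑' i, f i ^ 2 := Summable.sum_le_tsum s (fun i _ => sq_nonneg _) hf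
  have e2 : (∑ i ∈ s, g i ^ 2) ≤ ∑' i, g i ^ 2 := Summable.sum_le_tsum s (fun i _ => sq_nonneg _) hg
  exact mul_le_mul (Real.sqrt_le_sqrt e1) (Real.sqrt_le_sqrt e2)
    (Real.sqrt_nonneg _) (Real.sqrt_nonneg _)

private lemma aux_weak {Λ : Type*} (dd : ℕ → Λ → ℝ) (z : Λ → ℝ) (M : ℝ)
    (hz : Summable fun l => z l ^ 2)
    (hd2 : ∀ k, Summable fun l => dd k l ^ 2)
    (hdM : ∀ k, ∑' l, dd k l ^ 2 ≤ M)
    (hpt : ∀ l, Tendsto (fun k => dd k l) atTop (nhds 0)) :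
    Tendsto (fun k => ∑' l, dd k l * z l) atTop (nhds 0) := by
  have hM0 : 0 ≤ M := le_trans (tsum_nonneg fun l => sq_nonneg _) (hdM 0)
  rw [Metric.tendsto_atTop]
  intro ε hε
  have hden : 0 < Real.sqrt M + 1 := by positivity
  set ε' : ℝ := ε / (2 * (Real.sqrt M + 1)) with hε'def
  have hε' : 0 < ε' := by positivity
  have htail := tendsto_tsum_compl_atTop_zero (f := fun l => z l ^ 2)
  obtain ⟨s, hs⟩ := ((tendsto_order.1 htail).2 (ε' ^ 2) (by positivity)).exists
  have hfin : Tendsto (fun k => ∑ l ∈ s, dd k l * z l) atTop (nhds 0) := by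
    have := tendsto_finset_sum s (fun l (_ : l ∈ s) => (hpt l).mul_const (z l))
    simpa using this
  obtain ⟨N, hN⟩ := (Metric.tendsto_atTop.mp hfin) (ε / 2) (by positivity)
  refine ⟨N, fun k hk => ?_⟩
  have hsumk : Summable fun l => dd k l * z l :=
    summable_abs_iff.mp (aux_summable_mul (hd2 k) hz)
  -- tail bound
  have key1 : |∑' l : ↑((↑s : Set Λ)ᶜ), dd k l * z l| ≤ Real.sqrt M * ε' := by
    have h := aux_cs_tsum (f := fun l : ↑((↑s : Set Λ)ᶜ) => dd k l)
      (g := fun l : ↑((↑s : Set Λ)ᶜ) => z l)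
      ((hd2 k).subtype _) (hz.subtype _)
    refine h.trans (mul_le_mul ?_ ?_ (Real.sqrt_nonneg _) (Real.sqrt_nonneg _))
    · apply Real.sqrt_le_sqrt
      refine le_trans (le_of_eq (tsum_subtype ((↑s : Set Λ)ᶜ) (fun l => dd k l ^ 2))) ?_
      exact le_trans (Summable.tsum_le_tsum
        (fun l => Set.indicator_le_self' (fun _ _ => sq_nonneg _) l)
        (((hd2 k).indicator _)) (hd2 k)) (hdM k)
    · have hle : (∑' l : ↑((↑s : Set Λ)ᶜ), z l ^ 2) ≤ ε' ^ 2 := le_of_lt hs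
      calc Real.sqrt (∑' l : ↑((↑s : Set Λ)ᶜ), z l ^ 2) ≤ Real.sqrt (ε' ^ 2) :=
            Real.sqrt_le_sqrt hle
        _ = ε' := Real.sqrt_sq hε'.le
  have hsplit : ∑' l, dd k l * z l =
      (∑ l ∈ s, dd k l * z l) + ∑' l : ↑((↑s : Set Λ)ᶜ), dd k l * z l :=
    (Summable.sum_add_tsum_compl hsumk).symm
  have hfinb : |∑ l ∈ s, dd k l * z l| < ε / 2 := by
    have := hN k hk; rwa [Real.dist_eq, sub_zero] at this
  rw [Real.dist_eq, sub_zero, hsplit]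
  have htb : Real.sqrt M * ε' ≤ ε / 2 := by
    have h2 : Real.sqrt M * ε' ≤ (Real.sqrt M + 1) * ε' := by nlinarith
    have h3 : (Real.sqrt M + 1) * ε' = ε / 2 := by
      rw [hε'def]; field_simp
    linarith
  calc |(∑ l ∈ s, dd k l * z l) + ∑' l : ↑((↑s : Set Λ)ᶜ), dd k l * z l|
      ≤ |∑ l ∈ s, dd k l * z l| + |∑' l : ↑((↑s : Set Λ)ᶜ), dd k l * z l| := abs_add_le _ _
    _ < ε / 2 + Real.sqrt M * ε' := add_lt_add_of_lt_of_le hfinb key1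
    _ ≤ ε / 2 + ε / 2 := by linarith
    _ = ε := by ring

private lemma aux_memℓp_iff {ι : Type*} (f : ι → ℝ) :
    Memℓp f 2 ↔ Summable (fun i => f i ^ 2) := by
  have h2 : ∀ x : ℝ, ‖x‖ ^ ((2 : ℝ≥0∞)).toReal = x ^ 2 := by
    intro x
    rw [ENNReal.toReal_ofNat, show ((2 : ℝ)) = ((2 : ℕ) : ℝ) by norm_num, Real.rpow_natCast]
    simp [Real.norm_eq_abs, sq_abs]
  constructor
  · intro h
    have := h.summable (by norm_num)
    simpa only [h2] using this
  · intro h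
    apply memℓp_gen
    simpa only [h2] using h

/-- A non-linear regularizing filter: `φ α κ` is (F1) monotone, (F2) nonexpansive,
(F3) zero at zero, and (F4) converges pointwise to the identity as `α → 0`. -/
def IsRegFilter (φ : ℝ → ℝ → ℝ → ℝ) : Prop :=
  (∀ α > (0 : ℝ), ∀ κ > (0 : ℝ), Monotone (φ α κ)) ∧
  (∀ α > (0 : ℝ), ∀ κ > (0 : ℝ), ∀ x y : ℝ, |φ α κ x - φ α κ y| ≤ |x - y|) ∧
  (∀ α > (0 : ℝ), ∀ κ > (0 : ℝ), φ α κ 0 = 0) ∧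
  (∀ κ > (0 : ℝ), ∀ c : ℝ,
    Tendsto (fun α => φ α κ c) (nhdsWithin 0 (Set.Ioi 0)) (nhds c))

/-- Assumption B: (B1) `α ↦ |φ_α(κ,x)|` increases as `α` decreases, and (B2) there are
`d, e > 0` with `|φ_α(κ,x)| ≤ (eκ/√α)·|x|` whenever `|x| ≤ dα/κ`. -/
def AssumptionB (φ : ℝ → ℝ → ℝ → ℝ) : Prop :=
  (∀ κ > (0 : ℝ), ∀ x : ℝ, ∀ α β : ℝ, 0 < α → α ≤ β → |φ β κ x| ≤ |φ α κ x|) ∧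
  (∃ d > (0 : ℝ), ∃ e > (0 : ℝ), ∀ κ > (0 : ℝ), ∀ α > (0 : ℝ), ∀ x : ℝ,
    |x| ≤ d * α / κ → |φ α κ x| ≤ e * κ / Real.sqrt α * |x|)

set_option maxHeartbeats 1000000 in
/-- **Stability of the non-linear filtered DFD.** Given a diagonal frame
decomposition `(u, v, κ)` of a bounded operator `A : X → Y`, a dual frame `ū` of `u` with
bounded synthesis operator `T`, and a non-linear regularizing filter satisfying
Assumption B: for fixed `α > 0` and `y^k → y^δ` in `Y`, the reconstructions
`B_α(y^k) = ∑_λ κ_λ⁻¹ φ_α(κ_λ, ⟨y^k, v_λ⟩) ū_λ` are well defined and converge weakly to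
`B_α(y^δ)`. -/
theorem statement10
    {X Y : Type*} [NormedAddCommGroup X] [InnerProductSpace ℝ X] [CompleteSpace X]
    [NormedAddCommGroup Y] [InnerProductSpace ℝ Y] [CompleteSpace Y]
    {Λ : Type*} [Countable Λ]
    (A : X →L[ℝ] Y) (u ubar : Λ → X) (v : Λ → Y) (κ : Λ → ℝ)
    (hκpos : ∀ l, 0 < κ l) (hκbd : BddAbove (Set.range κ))
    (hu_mem : ∀ l, u l ∈ (LinearMap.ker (A : X →ₗ[ℝ] Y))ᗮ)
    (hu_frame : ∃ a b : ℝ, 0 < a ∧ a ≤ b ∧ ∀ x ∈ (LinearMap.ker (A : X →ₗ[ℝ] Y))ᗮ,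
      Summable (fun l => ⟪x, u l⟫ ^ 2) ∧
      a * ‖x‖ ^ 2 ≤ ∑' l, ⟪x, u l⟫ ^ 2 ∧ ∑' l, ⟪x, u l⟫ ^ 2 ≤ b * ‖x‖ ^ 2)
    (hv_mem : ∀ l, v l ∈ (LinearMap.range (A : X →ₗ[ℝ] Y)).topologicalClosure)
    (hv_frame : ∃ a b : ℝ, 0 < a ∧ a ≤ b ∧
      ∀ y ∈ (LinearMap.range (A : X →ₗ[ℝ] Y)).topologicalClosure,
        Summable (fun l => ⟪y, v l⟫ ^ 2) ∧
        a * ‖y‖ ^ 2 ≤ ∑' l, ⟪y, v l⟫ ^ 2 ∧ ∑' l, ⟪y, v l⟫ ^ 2 ≤ b * ‖y‖ ^ 2)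
    (hquasi : ∀ l, ContinuousLinearMap.adjoint A (v l) = κ l • u l)
    (T : lp (fun _ : Λ => ℝ) 2 →L[ℝ] X)
    (hT : ∀ c : lp (fun _ : Λ => ℝ) 2, HasSum (fun l => c l • ubar l) (T c))
    (hdual : ∀ x ∈ (LinearMap.ker (A : X →ₗ[ℝ] Y))ᗮ, HasSum (fun l => ⟪x, u l⟫ • ubar l) x)
    (φ : ℝ → ℝ → ℝ → ℝ) (hfilter : IsRegFilter φ) (hB : AssumptionB φ)
    (α : ℝ) (hα : 0 < α)
    (yδ : Y) (yk : ℕ → Y) (hyk : Tendsto (fun k => ‖yk k - yδ‖) atTop (nhds 0)) :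
    ∃ (hc : Memℓp (fun l => φ α (κ l) ⟪yδ, v l⟫ / κ l) 2)
      (hck : ∀ k, Memℓp (fun l => φ α (κ l) ⟪yk k, v l⟫ / κ l) 2),
      ∀ w : X,
        Tendsto
          (fun k =>
            ⟪T (⟨fun l => φ α (κ l) ⟪yk k, v l⟫ / κ l, hck k⟩ : lp (fun _ : Λ => ℝ) 2), w⟫)
          atTop
          (nhds ⟪T (⟨fun l => φ α (κ l) ⟪yδ, v l⟫ / κ l, hc⟩ : lp (fun _ : Λ => ℝ) 2), w⟫) := by
    classical
  obtain ⟨hmono, hlip, hzero, hlim⟩ := hfilter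
  obtain ⟨hB1, d, hd, e, he, hB2⟩ := hB
  have hsqrtα : 0 < Real.sqrt α := Real.sqrt_pos.mpr hα
  set C1 : ℝ := e / Real.sqrt α with hC1def
  set C2 : ℝ := 1 / (d * α) with hC2def
  have hC1 : 0 ≤ C1 := by positivity
  have hC2 : 0 < C2 := by positivity
  -- basic bound |φ α κ x| ≤ |x|
  have hφabs : ∀ κ' : ℝ, 0 < κ' → ∀ x : ℝ, |φ α κ' x| ≤ |x| := by
    intro κ' hκ' x
    have := hlip α hα κ' hκ' x 0
    simpa [hzero α hα κ' hκ'] using this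
  -- key coordinatewise bound
  have key : ∀ (l : Λ) (x : ℝ), |φ α (κ l) x / κ l| ≤ C1 * |x| + C2 * x ^ 2 := by
    intro l x
    have hκ := hκpos l
    rw [abs_div, abs_of_pos hκ]
    rcases le_or_gt |x| (d * α / κ l) with hx | hx
    · have h1 := hB2 (κ l) hκ α hα x hx
      have h2 : |φ α (κ l) x| / κ l ≤ C1 * |x| := by
        rw [div_le_iff₀ hκ]
        refine h1.trans (le_of_eq ?_)
        rw [hC1def]; field_simp
      have h3 : 0 ≤ C2 * x ^ 2 := mul_nonneg hC2.le (sq_nonneg _)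
      linarith
    · have hφ := hφabs (κ l) hκ x
      have hx' : d * α < |x| * κ l := (div_lt_iff₀ hκ).mp hx
      have hda : 0 < d * α := mul_pos hd hα
      have hx0 : 0 < |x| := by nlinarith [abs_nonneg x]
      have h2 : |φ α (κ l) x| / κ l ≤ |x| / κ l := by gcongr
      have h3 : |x| / κ l ≤ C2 * x ^ 2 := by
        rw [div_le_iff₀ hκ, hC2def]
        have hx2 : x ^ 2 = |x| * |x| := by rw [← sq_abs]; ring
        rw [hx2, div_mul_eq_mul_div, div_mul_eq_mul_div, le_div_iff₀ hda]
        nlinarith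
      have h4 : 0 ≤ C1 * |x| := mul_nonneg hC1 (abs_nonneg _)
      linarith
  obtain ⟨av, bv, hav, havbv, hvf⟩ := hv_frame
  have hbv : 0 < bv := lt_of_lt_of_le hav havbv
  -- summability of the analysis coefficients
  have hx2 : ∀ y : Y, Summable (fun l => ⟪y, v l⟫ ^ 2) ∧
      (∑' l, ⟪y, v l⟫ ^ 2) ≤ bv * ‖y‖ ^ 2 := by
    intro y
    haveI : CompleteSpace ((LinearMap.range (A : X →ₗ[ℝ] Y)).topologicalClosure : Submodule ℝ Y) :=
      (Submodule.isClosed_topologicalClosure _).completeSpace_coe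
    set K : Submodule ℝ Y := (LinearMap.range (A : X →ₗ[ℝ] Y)).topologicalClosure with hKdef
    set Py : Y := (K.orthogonalProjectionOnto y : Y) with hPydef
    have hPymem : Py ∈ K := (K.orthogonalProjectionOnto y).2
    have hinner : ∀ l, ⟪y, v l⟫ = ⟪Py, v l⟫ := by
      intro l
      have h0 : ⟪y - Py, v l⟫ = 0 :=
        Submodule.starProjection_inner_eq_zero (K := K) y (v l) (hv_mem l)
      rw [inner_sub_left] at h0
      linarith
    have hPn : ‖Py‖ ≤ ‖y‖ := by
      calc ‖Py‖ = ‖K.orthogonalProjectionOnto y‖ := rfl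
        _ ≤ ‖K.orthogonalProjectionOnto‖ * ‖y‖ := (K.orthogonalProjectionOnto).le_opNorm y
        _ ≤ 1 * ‖y‖ :=
            mul_le_mul_of_nonneg_right (Submodule.orthogonalProjectionOnto_norm_le K) (norm_nonneg y)
        _ = ‖y‖ := one_mul _
    obtain ⟨hs, hlb, hub⟩ := hvf Py hPymem
    constructor
    · simp only [hinner]
      exact hs
    · calc (∑' l, ⟪y, v l⟫ ^ 2) = ∑' l, ⟪Py, v l⟫ ^ 2 := by simp only [hinner]
        _ ≤ bv * ‖Py‖ ^ 2 := hub
        _ ≤ bv * ‖y‖ ^ 2 := by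
            have hsq : ‖Py‖ ^ 2 ≤ ‖y‖ ^ 2 := by nlinarith [norm_nonneg Py]
            exact mul_le_mul_of_nonneg_left hsq hbv.le
  -- summability and bound for the filtered coefficients
  have hcb : ∀ y : Y, Summable (fun l => (φ α (κ l) ⟪y, v l⟫ / κ l) ^ 2) ∧
      (∑' l, (φ α (κ l) ⟪y, v l⟫ / κ l) ^ 2) ≤
        (2 * C1 ^ 2 + 2 * C2 ^ 2 * (bv * ‖y‖ ^ 2)) * (bv * ‖y‖ ^ 2) := by
    intro y
    obtain ⟨hs, hub⟩ := hx2 y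
    set Sb : ℝ := bv * ‖y‖ ^ 2 with hSbdef
    have hSb0 : 0 ≤ Sb := mul_nonneg hbv.le (sq_nonneg _)
    have hpt : ∀ l, (φ α (κ l) ⟪y, v l⟫ / κ l) ^ 2 ≤
        (2 * C1 ^ 2 + 2 * C2 ^ 2 * Sb) * ⟪y, v l⟫ ^ 2 := by
      intro l
      have hk := key l ⟪y, v l⟫
      have hxl : ⟪y, v l⟫ ^ 2 ≤ Sb :=
        le_trans (Summable.le_tsum hs l fun _ _ => sq_nonneg _) hub
      have h1 : (φ α (κ l) ⟪y, v l⟫ / κ l) ^ 2 ≤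
          (C1 * |⟪y, v l⟫| + C2 * ⟪y, v l⟫ ^ 2) ^ 2 := by
        rw [← sq_abs (φ α (κ l) ⟪y, v l⟫ / κ l)]
        exact pow_le_pow_left₀ (abs_nonneg _) hk 2
      have h4 : ⟪y, v l⟫ ^ 2 * ⟪y, v l⟫ ^ 2 ≤ Sb * ⟪y, v l⟫ ^ 2 :=
        mul_le_mul_of_nonneg_right hxl (sq_nonneg _)
      nlinarith [sq_abs ⟪y, v l⟫, sq_nonneg (C1 * |⟪y, v l⟫| - C2 * ⟪y, v l⟫ ^ 2),
        sq_nonneg ⟪y, v l⟫, mul_nonneg hC1 (abs_nonneg ⟪y, v l⟫), hC2.le,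
        sq_nonneg C1, sq_nonneg C2]
    have hcoef : 0 ≤ 2 * C1 ^ 2 + 2 * C2 ^ 2 * Sb := by
      nlinarith [sq_nonneg C1, sq_nonneg C2]
    have hsumm : Summable (fun l => (φ α (κ l) ⟪y, v l⟫ / κ l) ^ 2) :=
      Summable.of_nonneg_of_le (fun l => sq_nonneg _) hpt (hs.mul_left _)
    refine ⟨hsumm, ?_⟩
    calc (∑' l, (φ α (κ l) ⟪y, v l⟫ / κ l) ^ 2)
        ≤ ∑' l, (2 * C1 ^ 2 + 2 * C2 ^ 2 * Sb) * ⟪y, v l⟫ ^ 2 :=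
          Summable.tsum_le_tsum hpt hsumm (hs.mul_left _)
      _ = (2 * C1 ^ 2 + 2 * C2 ^ 2 * Sb) * ∑' l, ⟪y, v l⟫ ^ 2 := tsum_mul_left
      _ ≤ (2 * C1 ^ 2 + 2 * C2 ^ 2 * Sb) * Sb := mul_le_mul_of_nonneg_left hub hcoef
  have hmem : ∀ y : Y, Memℓp (fun l => φ α (κ l) ⟪y, v l⟫ / κ l) 2 :=
    fun y => (aux_memℓp_iff _).2 (hcb y).1
  refine ⟨hmem yδ, fun k => hmem (yk k), ?_⟩
  -- uniform bound over k
  obtain ⟨C0, hC0⟩ := hyk.bddAbove_range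
  have hC00 : 0 ≤ C0 := le_trans (norm_nonneg _) (hC0 (Set.mem_range_self 0))
  set R : ℝ := C0 + ‖yδ‖ with hRdef
  have hR0 : 0 ≤ R := by positivity
  have hRy : ∀ k, ‖yk k‖ ≤ R := by
    intro k
    have h1 : ‖yk k‖ ≤ ‖yk k - yδ‖ + ‖yδ‖ := by
      simpa using norm_add_le (yk k - yδ) yδ
    have h2 : ‖yk k - yδ‖ ≤ C0 := hC0 (Set.mem_range_self k)
    linarith
  have hRδ : ‖yδ‖ ≤ R := by linarith
  set M1 : ℝ := (2 * C1 ^ 2 + 2 * C2 ^ 2 * (bv * R ^ 2)) * (bv * R ^ 2) with hM1def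
  have hmono' : ∀ y : Y, ‖y‖ ≤ R → (∑' l, (φ α (κ l) ⟪y, v l⟫ / κ l) ^ 2) ≤ M1 := by
    intro y hy
    refine (hcb y).2.trans ?_
    have hsq : ‖y‖ ^ 2 ≤ R ^ 2 := by nlinarith [norm_nonneg y]
    have ht : bv * ‖y‖ ^ 2 ≤ bv * R ^ 2 := mul_le_mul_of_nonneg_left hsq hbv.le
    have ht0 : 0 ≤ bv * ‖y‖ ^ 2 := mul_nonneg hbv.le (sq_nonneg _)
    have hc2 : (0:ℝ) ≤ 2 * C2 ^ 2 := by positivity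
    rw [hM1def]
    have h1 : 2 * C2 ^ 2 * (bv * ‖y‖ ^ 2) ≤ 2 * C2 ^ 2 * (bv * R ^ 2) :=
      mul_le_mul_of_nonneg_left ht hc2
    have h2 : (0:ℝ) ≤ 2 * C1 ^ 2 + 2 * C2 ^ 2 * (bv * ‖y‖ ^ 2) := by positivity
    calc (2 * C1 ^ 2 + 2 * C2 ^ 2 * (bv * ‖y‖ ^ 2)) * (bv * ‖y‖ ^ 2)
        ≤ (2 * C1 ^ 2 + 2 * C2 ^ 2 * (bv * R ^ 2)) * (bv * ‖y‖ ^ 2) := by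
          apply mul_le_mul_of_nonneg_right _ ht0
          linarith
      _ ≤ (2 * C1 ^ 2 + 2 * C2 ^ 2 * (bv * R ^ 2)) * (bv * R ^ 2) := by
          apply mul_le_mul_of_nonneg_left ht
          positivity
  set M : ℝ := 4 * M1 with hMdef
  -- the difference sequence
  have hdd2 : ∀ k, Summable (fun l =>
      (φ α (κ l) ⟪yk k, v l⟫ / κ l - φ α (κ l) ⟪yδ, v l⟫ / κ l) ^ 2) := by
    intro k
    refine Summable.of_nonneg_of_le (fun l => sq_nonneg _) (fun l => ?_)
      (((hcb (yk k)).1.mul_left 2).add ((hcb yδ).1.mul_left 2))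
    nlinarith [sq_nonneg (φ α (κ l) ⟪yk k, v l⟫ / κ l + φ α (κ l) ⟪yδ, v l⟫ / κ l)]
  have hddM : ∀ k, (∑' l,
      (φ α (κ l) ⟪yk k, v l⟫ / κ l - φ α (κ l) ⟪yδ, v l⟫ / κ l) ^ 2) ≤ M := by
    intro k
    have hsum2 : Summable (fun l => 2 * (φ α (κ l) ⟪yk k, v l⟫ / κ l) ^ 2 +
        2 * (φ α (κ l) ⟪yδ, v l⟫ / κ l) ^ 2) :=
      ((hcb (yk k)).1.mul_left 2).add ((hcb yδ).1.mul_left 2)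
    calc (∑' l, (φ α (κ l) ⟪yk k, v l⟫ / κ l - φ α (κ l) ⟪yδ, v l⟫ / κ l) ^ 2)
        ≤ ∑' l, (2 * (φ α (κ l) ⟪yk k, v l⟫ / κ l) ^ 2 +
            2 * (φ α (κ l) ⟪yδ, v l⟫ / κ l) ^ 2) := by
          refine Summable.tsum_le_tsum (fun l => ?_) (hdd2 k) hsum2
          nlinarith [sq_nonneg (φ α (κ l) ⟪yk k, v l⟫ / κ l + φ α (κ l) ⟪yδ, v l⟫ / κ l)]
      _ = 2 * (∑' l, (φ α (κ l) ⟪yk k, v l⟫ / κ l) ^ 2) +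
            2 * (∑' l, (φ α (κ l) ⟪yδ, v l⟫ / κ l) ^ 2) := by
          rw [Summable.tsum_add ((hcb (yk k)).1.mul_left 2) ((hcb yδ).1.mul_left 2),
            tsum_mul_left, tsum_mul_left]
      _ ≤ M := by
          have h1 := hmono' (yk k) (hRy k)
          have h2 := hmono' yδ hRδ
          rw [hMdef]; linarith
  -- pointwise convergence of the coefficients
  have hptw : ∀ l, Tendsto (fun k =>
      φ α (κ l) ⟪yk k, v l⟫ / κ l - φ α (κ l) ⟪yδ, v l⟫ / κ l) atTop (nhds 0) := by
    intro l
    have hκ := hκpos l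
    apply squeeze_zero_norm (a := fun k => ‖yk k - yδ‖ * (‖v l‖ / κ l))
    · intro k
      calc ‖φ α (κ l) ⟪yk k, v l⟫ / κ l - φ α (κ l) ⟪yδ, v l⟫ / κ l‖
          = |φ α (κ l) ⟪yk k, v l⟫ - φ α (κ l) ⟪yδ, v l⟫| / κ l := by
            rw [Real.norm_eq_abs, ← sub_div, abs_div, abs_of_pos hκ]
        _ ≤ |⟪yk k, v l⟫ - ⟪yδ, v l⟫| / κ l :=
            (div_le_div_iff_of_pos_right hκ).mpr (hlip α hα (κ l) hκ _ _)
        _ ≤ ‖yk k - yδ‖ * ‖v l‖ / κ l := by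
            apply (div_le_div_iff_of_pos_right hκ).mpr
            have h5 : ⟪yk k, v l⟫ - ⟪yδ, v l⟫ = ⟪yk k - yδ, v l⟫ :=
              (inner_sub_left _ _ _).symm
            rw [h5]
            exact abs_real_inner_le_norm _ _
        _ = ‖yk k - yδ‖ * (‖v l‖ / κ l) := by ring
    · simpa using hyk.mul_const (‖v l‖ / κ l)
  intro w
  set z := ContinuousLinearMap.adjoint T w with hzdef
  have hz2 : Summable fun l => (z l) ^ 2 := (aux_memℓp_iff _).1 (lp.memℓp z)
  have main := aux_weak
    (fun k l => φ α (κ l) ⟪yk k, v l⟫ / κ l - φ α (κ l) ⟪yδ, v l⟫ / κ l)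
    (fun l => z l) M hz2 hdd2 hddM hptw
  have hinner : ∀ ξ : lp (fun _ : Λ => ℝ) 2, ⟪T ξ, w⟫ = ∑' l, ξ l * z l := by
    intro ξ
    rw [← ContinuousLinearMap.adjoint_inner_right T ξ w, ← hzdef,
      lp.inner_eq_tsum]
    simp [RCLike.inner_apply, conj_trivial, mul_comm]
  rw [← tendsto_sub_nhds_zero_iff]
  refine main.congr fun k => ?_
  rw [hinner, hinner]
  have hs1 : Summable (fun l => (φ α (κ l) ⟪yk k, v l⟫ / κ l) * z l) :=
    summable_abs_iff.mp (aux_summable_mul (hcb (yk k)).1 hz2)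
  have hs2 : Summable (fun l => (φ α (κ l) ⟪yδ, v l⟫ / κ l) * z l) :=
    summable_abs_iff.mp (aux_summable_mul (hcb yδ).1 hz2)
  rw [← Summable.tsum_sub hs1 hs2]
  exact tsum_congr fun l => sub_mul _ _ _
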